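/- arXiv:2501.12233 — 2 statements merged into one kernel-verified Lean document; each statement's English description precedes it below -/
import Mathlib

section
/- Let κ₁,…,κ₁₀, c₁, c₂ be positive reals and let (x₁,…,x₇) ∈ ℝ⁷ be a solution of the gene regulatory network steady-state system (the seven mass-action equations together with x₂ + x₅ = c₁ and x₁ + x₇ = c₂) with x₂ > 0. Then x₂ satisfies the cubic equation x₂³ − c₁x₂² + ((κ₁κ₄²κ₅κ₈κ₁₀c₂ + κ₃κ₄²κ₆κ₈κ₁₀)/(κ₂²κ₃κ₆κ₇κ₉))·x₂ − (κ₄²κ₈κ₁₀c₁)/(κ₂²κ₇κ₉) = 0. -/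
theorem stmt18 (κ₁ κ₂ κ₃ κ₄ κ₅ κ₆ κ₇ κ₈ κ₉ κ₁₀ c₁ c₂ : ℝ)
    (hκ₁ : 0 < κ₁) (hκ₂ : 0 < κ₂) (hκ₃ : 0 < κ₃) (hκ₄ : 0 < κ₄) (hκ₅ : 0 < κ₅)
    (hκ₆ : 0 < κ₆) (hκ₇ : 0 < κ₇) (hκ₈ : 0 < κ₈) (hκ₉ : 0 < κ₉) (hκ₁₀ : 0 < κ₁₀)
    (hc₁ : 0 < c₁) (hc₂ : 0 < c₂)
    (x₁ x₂ x₃ x₄ x₅ x₆ x₇ : ℝ)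
    (e1 : κ₁₀ * x₇ - κ₉ * x₁ * x₆ = 0)
    (e2 : κ₆ * x₅ - κ₅ * x₂ * x₃ = 0)
    (e3 : κ₁ * x₁ - κ₃ * x₃ + κ₆ * x₅ - κ₅ * x₂ * x₃ = 0)
    (e4 : -2 * κ₇ * x₄ ^ 2 - κ₄ * x₄ + κ₂ * x₂ + 2 * κ₈ * x₆ = 0)
    (e5 : κ₅ * x₂ * x₃ - κ₆ * x₅ = 0)
    (e6 : κ₇ * x₄ ^ 2 - κ₈ * x₆ + κ₁₀ * x₇ - κ₉ * x₁ * x₆ = 0)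
    (e7 : κ₉ * x₁ * x₆ - κ₁₀ * x₇ = 0)
    (c1 : x₂ + x₅ = c₁)
    (c2 : x₁ + x₇ = c₂) (hx₂ : 0 < x₂) :
    x₂ ^ 3 - c₁ * x₂ ^ 2 +
      ((κ₁ * κ₄ ^ 2 * κ₅ * κ₈ * κ₁₀ * c₂ + κ₃ * κ₄ ^ 2 * κ₆ * κ₈ * κ₁₀) /
        (κ₂ ^ 2 * κ₃ * κ₆ * κ₇ * κ₉)) * x₂ -
      (κ₄ ^ 2 * κ₈ * κ₁₀ * c₁) / (κ₂ ^ 2 * κ₇ * κ₉) = 0 := by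
  have h4 : κ₄ * x₄ = κ₂ * x₂ := by linarith [e4, e6, e7]
  have h6 : κ₈ * x₆ = κ₇ * x₄ ^ 2 := by linarith
  have hx₆ : κ₄ ^ 2 * κ₈ * x₆ = κ₂ ^ 2 * κ₇ * x₂ ^ 2 := by
    linear_combination κ₄ ^ 2 * h6 + κ₇ * (κ₄ * x₄ + κ₂ * x₂) * h4
  have h3 : κ₁ * x₁ = κ₃ * x₃ := by linarith
  have hx₅ : x₅ = c₁ - x₂ := by linarith
  have hA : κ₁ * κ₅ * x₂ * x₁ = κ₃ * κ₆ * (c₁ - x₂) := by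
    linear_combination κ₅ * x₂ * h3 + κ₃ * e5 + κ₃ * κ₆ * hx₅
  have hB : x₁ * (κ₉ * x₆ + κ₁₀) = κ₁₀ * c₂ := by
    linear_combination e7 + κ₁₀ * c2
  have key : κ₁ * κ₅ * κ₁₀ * c₂ * x₂ = κ₃ * κ₆ * (c₁ - x₂) * (κ₉ * x₆ + κ₁₀) := by
    linear_combination (κ₉ * x₆ + κ₁₀) * hA - κ₁ * κ₅ * x₂ * hB
  have hD : (κ₂ ^ 2 * κ₃ * κ₆ * κ₇ * κ₉ : ℝ) ≠ 0 := by positivity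
  have hD2 : (κ₂ ^ 2 * κ₇ * κ₉ : ℝ) ≠ 0 := by positivity
  field_simp
  linear_combination (κ₄ ^ 2 * κ₈ * key + κ₃ * κ₆ * κ₉ * (c₁ - x₂) * hx₆)
end

section
/- Let K be an algebraically closed field and I ⊆ K[x₁,…,xₙ] an ideal whose generating set has the triangular shape xₙ − gₙ(x₁), …, x₂ − g₂(x₁), g₁(x₁) with g₁ a nonzero squarefree polynomial of degree d. Then the zero set of I in Kⁿ has exactly d points, and the map sending a zero p to its first coordinate p₁ is injective (i.e., I is in normal form). -/
theorem stmt19 (K : Type*) [Field K] [IsAlgClosed K]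
    (n : ℕ) (hn : 2 ≤ n) (d : ℕ)
    (g : Fin n → Polynomial K)
    (hg1 : g ⟨0, by omega⟩ ≠ 0)
    (hsf : Squarefree (g ⟨0, by omega⟩))
    (hd : (g ⟨0, by omega⟩).natDegree = d)
    (I : Ideal (MvPolynomial (Fin n) K))
    (hI : I = Ideal.span
      ({Polynomial.aeval (MvPolynomial.X (⟨0, by omega⟩ : Fin n)) (g ⟨0, by omega⟩)} ∪
        {f | ∃ j : Fin n, j ≠ ⟨0, by omega⟩ ∧
          f = MvPolynomial.X j -
            Polynomial.aeval (MvPolynomial.X (⟨0, by omega⟩ : Fin n)) (g j)})) :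
    {p : Fin n → K | ∀ f ∈ I, MvPolynomial.aeval p f = 0}.ncard = d ∧
    Set.InjOn (fun p : Fin n → K => p ⟨0, by omega⟩)
      {p : Fin n → K | ∀ f ∈ I, MvPolynomial.aeval p f = 0} := by
  classical
  set i0 : Fin n := ⟨0, by omega⟩ with hi0
  have key : ∀ (p : Fin n → K) (i : Fin n) (q : Polynomial K),
      MvPolynomial.aeval (R := K) p (Polynomial.aeval (R := K) (MvPolynomial.X i) q) = Polynomial.eval (p i) q := by
    intro p i q
    have h := Polynomial.aeval_algHom_apply (MvPolynomial.aeval (R := K) p)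
      (MvPolynomial.X i) q
    simp only [MvPolynomial.aeval_X] at h
    rw [← h, Polynomial.aeval_def, Polynomial.eval, Algebra.algebraMap_self]
  have hmem : ∀ p : Fin n → K,
      (∀ f ∈ I, MvPolynomial.aeval p f = 0) ↔
      (Polynomial.eval (p i0) (g i0) = 0 ∧
        ∀ j : Fin n, j ≠ i0 → p j = Polynomial.eval (p i0) (g j)) := by
    intro p
    constructor
    · intro h
      refine ⟨?_, ?_⟩
      · have := h _ (show _ ∈ I by rw [hI]; exact Ideal.subset_span (by left; rfl))
        rwa [key] at this
      · intro j hj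
        have := h _ (show _ ∈ I by
          rw [hI]; exact Ideal.subset_span (by right; exact ⟨j, hj, rfl⟩))
        rw [map_sub, key, MvPolynomial.aeval_X, sub_eq_zero] at this
        exact this
    · rintro ⟨h1, h2⟩ f hf
      rw [hI] at hf
      have hle : Ideal.span
          ({Polynomial.aeval (MvPolynomial.X i0) (g i0)} ∪
            {f | ∃ j : Fin n, j ≠ i0 ∧
              f = MvPolynomial.X j - Polynomial.aeval (MvPolynomial.X i0) (g j)})
          ≤ RingHom.ker (MvPolynomial.aeval p (R := K)) := by
        rw [Ideal.span_le]
        rintro f (hf | ⟨j, hj, rfl⟩)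
        · rcases hf with rfl
          simp [RingHom.mem_ker, key, h1]
        · simp [RingHom.mem_ker, key, h2 j hj]
          rw [← MvPolynomial.coe_aeval_eq_eval, RingHom.coe_coe, key, sub_self]
      exact hle hf
  set Z := {p : Fin n → K | ∀ f ∈ I, MvPolynomial.aeval p f = 0} with hZ
  set Φ : K → (Fin n → K) := fun t j => if j = i0 then t else Polynomial.eval t (g j) with hΦ
  have hΦ0 : ∀ t, Φ t i0 = t := by intro t; simp [hΦ]
  have hrep : ∀ p ∈ Z, p = Φ (p i0) := by
    intro p hp
    rcases (hmem p).mp hp with ⟨h1, h2⟩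
    funext j
    by_cases hj : j = i0
    · subst hj; simp [hΦ]
    · simp [hΦ, hj, h2 j hj]
  have hZeq : Z = Φ '' ((g i0).roots.toFinset : Set K) := by
    ext p
    constructor
    · intro hp
      rcases (hmem p).mp hp with ⟨h1, h2⟩
      exact ⟨p i0, by simp [Polynomial.mem_roots, hg1, h1, Polynomial.IsRoot],
        (hrep p hp).symm⟩
    · rintro ⟨t, ht, rfl⟩
      simp only [Finset.coe_sort_coe, Finset.mem_coe, Multiset.mem_toFinset,
        Polynomial.mem_roots, hg1, ne_eq, not_false_eq_true, true_and,
        Polynomial.IsRoot] at ht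
      refine (hmem _).mpr ⟨?_, ?_⟩
      · rw [hΦ0]; exact ht
      · intro j hj; rw [hΦ0]; simp [hΦ, hj]
  constructor
  · have hinj : Function.Injective Φ := fun a b h => by
      rw [← hΦ0 a, ← hΦ0 b, h]
    rw [hZeq, Set.ncard_image_of_injective _ hinj, Set.ncard_coe_finset,
      Multiset.toFinset_card_of_nodup
        (Polynomial.nodup_roots (PerfectField.separable_iff_squarefree.mpr hsf)),
      Polynomial.splits_iff_card_roots.mp (IsAlgClosed.splits _), hd]
  · intro p hp q hq hpq
    rw [hrep p hp, hrep q hq]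
    simp only at hpq
    rw [show p i0 = q i0 from hpq]
end
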